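/- For 0 <= i <= n, the adjacency matrix A of SR(3,n) satisfies A X_i = (n-i-2) X_i + sum_{j=0}^{n-i} (Y_j + Z_j). -/

import Mathlib

open Finset

abbrev SRVert (d n : ℕ) : Type := {x : Fin d → ℕ // ∑ i, x i = n}

noncomputable instance SRVert.fintype (d n : ℕ) : Fintype (SRVert d n) :=
  Fintype.ofInjective
    (fun x : SRVert d n => fun i => (⟨x.1 i, by
      have h := Finset.single_le_sum (f := x.1)
        (fun j _ => Nat.zero_le (x.1 j)) (Finset.mem_univ i)
      have h2 := x.2
      omega⟩ : Fin (n+1)))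
    (fun x y h => Subtype.ext (funext fun i => congrArg Fin.val (congrFun h i)))

/-- The simplicial rook graph: two vertices are adjacent if they differ in
exactly two coordinates. -/
def SR (d n : ℕ) : SimpleGraph (SRVert d n) where
  Adj x y := (Finset.univ.filter fun i => x.1 i ≠ y.1 i).card = 2
  symm := ⟨by
    intro x y h
    beta_reduce at h ⊢
    rw [show (Finset.univ.filter fun i => y.1 i ≠ x.1 i)
        = (Finset.univ.filter fun i => x.1 i ≠ y.1 i) by
      apply Finset.filter_congr; intro i _; simp [ne_comm]]
    exact h⟩
  loopless := ⟨by intro z h; simp at h⟩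

instance (d n : ℕ) : DecidableRel (SR d n).Adj :=
  fun x y => inferInstanceAs (Decidable (_ = 2))


/-- Characteristic vector of the lattice line `{v : v₀ = i}` in `ℝ^{V(3,n)}`. -/
def Xv (n i : ℕ) : SRVert 3 n → ℝ := fun v => if v.1 0 = i then 1 else 0

/-- Characteristic vector of the lattice line `{v : v₁ = j}`. -/
def Yv (n j : ℕ) : SRVert 3 n → ℝ := fun v => if v.1 1 = j then 1 else 0

/-- Characteristic vector of the lattice line `{v : v₂ = k}`. -/
def Zv (n k : ℕ) : SRVert 3 n → ℝ := fun v => if v.1 2 = k then 1 else 0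

/-- The all-ones vector. -/
def Jv (n : ℕ) : SRVert 3 n → ℝ := fun _ => 1

/-- Standard basis vector `e_v`. -/
def ev {d n : ℕ} (v : SRVert d n) : SRVert d n → ℝ := fun w => if w = v then 1 else 0


/-- `A X_i = (n-i-2) X_i + ∑_{j=0}^{n-i} (Y_j + Z_j)`. -/
theorem adj_mulVec_X (n i : ℕ) (hi : i ≤ n) :
    ((SR 3 n).adjMatrix ℝ).mulVec (Xv n i)
      = ((n : ℝ) - i - 2) • Xv n i + ∑ j ∈ Finset.range (n - i + 1), (Yv n j + Zv n j) := by
  funext v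
  have hv : v.1 0 + v.1 1 + v.1 2 = n := by
    have := v.2; rwa [Fin.sum_univ_three] at this
  rw [SimpleGraph.adjMatrix_mulVec_apply]
  have hnb : (SR 3 n).neighborFinset v = univ.filter (fun u => (SR 3 n).Adj v u) := by
    ext u; simp [SimpleGraph.mem_neighborFinset]
  rw [hnb]
  have hLHS : ∑ u ∈ univ.filter (fun u => (SR 3 n).Adj v u), Xv n i u
      = ∑ u ∈ univ.filter (fun u : SRVert 3 n => u.1 0 = i),
          (if (SR 3 n).Adj v u then (1:ℝ) else 0) := by
    rw [Finset.sum_filter, Finset.sum_filter]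
    refine Finset.sum_congr rfl fun u _ => ?_
    unfold Xv
    split_ifs <;> simp_all
  rw [hLHS]
  have hbij : ∑ u ∈ univ.filter (fun u : SRVert 3 n => u.1 0 = i),
          (if (SR 3 n).Adj v u then (1:ℝ) else 0)
      = ∑ j ∈ Finset.range (n - i + 1),
          (if ((if v.1 0 = i then 0 else 1) + (if v.1 1 = j then 0 else 1)
              + (if v.1 0 + v.1 1 = i + j then 0 else 1) = 2) then (1:ℝ) else 0) := by
    refine Finset.sum_bij (fun u _ => u.1 1) ?_ ?_ ?_ ?_
    · intro u hu
      simp only [Finset.mem_filter, Finset.mem_univ, true_and] at hu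
      have h2 : u.1 0 + u.1 1 + u.1 2 = n := by
        have := u.2; rwa [Fin.sum_univ_three] at this
      simp only [Finset.mem_range]; omega
    · intro u hu u' hu' h
      simp only [Finset.mem_filter, Finset.mem_univ, true_and] at hu hu'
      have h2 : u.1 0 + u.1 1 + u.1 2 = n := by
        have := u.2; rwa [Fin.sum_univ_three] at this
      have h2' : u'.1 0 + u'.1 1 + u'.1 2 = n := by
        have := u'.2; rwa [Fin.sum_univ_three] at this
      apply Subtype.ext; funext t
      fin_cases t
      · show u.1 0 = u'.1 0; rw [hu, hu']
      · exact h
      · show u.1 2 = u'.1 2; omega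
    · intro j hj
      simp only [Finset.mem_range] at hj
      refine ⟨⟨![i, j, n - i - j], ?_⟩, ?_, ?_⟩
      · rw [Fin.sum_univ_three]
        show i + j + (n - i - j) = n
        omega
      · simp
      · simp
    · intro u hu
      simp only [Finset.mem_filter, Finset.mem_univ, true_and] at hu
      have h2 : u.1 0 + u.1 1 + u.1 2 = n := by
        have := u.2; rwa [Fin.sum_univ_three] at this
      have hadj : (SR 3 n).Adj v u ↔
          ((if v.1 0 = i then 0 else 1) + (if v.1 1 = u.1 1 then 0 else 1)
              + (if v.1 0 + v.1 1 = i + u.1 1 then 0 else 1) = 2) := by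
        show (univ.filter fun t => v.1 t ≠ u.1 t).card = 2 ↔ _
        rw [Finset.card_filter, Fin.sum_univ_three]
        constructor <;> intro h <;> [skip; skip] <;>
          (split_ifs at h ⊢ <;> omega)
      simp only [hadj]
  rw [hbij]
  -- simplify the RHS
  have hb : v.1 1 ≤ n := by omega
  have hc : v.1 2 ≤ n := by omega
  simp only [Pi.add_apply, Pi.smul_apply, smul_eq_mul, Finset.sum_apply, Yv, Zv, Xv,
    Finset.sum_add_distrib, Finset.sum_ite_eq, Finset.mem_range, Nat.lt_succ_iff]
  by_cases ha : v.1 0 = i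
  · have hptwise : ∀ j ∈ Finset.range (n - i + 1),
        (if ((if v.1 0 = i then 0 else 1) + (if v.1 1 = j then 0 else 1)
            + (if v.1 0 + v.1 1 = i + j then 0 else 1) = 2) then (1:ℝ) else 0)
        = 1 - (if v.1 1 = j then (1:ℝ) else 0) := by
      intro j _
      split_ifs <;> first | (exfalso; omega) | norm_num
    rw [Finset.sum_congr rfl hptwise, Finset.sum_sub_distrib, Finset.sum_const,
      Finset.card_range, Finset.sum_ite_eq]
    simp only [Finset.mem_range, Nat.lt_succ_iff]
    have h1 : v.1 1 ≤ n - i := by omega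
    have h2 : v.1 2 ≤ n - i := by omega
    rw [if_pos ha, if_pos h1, if_pos h2]
    have : ((n - i + 1 : ℕ) : ℝ) = (n : ℝ) - i + 1 := by
      push_cast [hi]; ring
    rw [nsmul_eq_mul, this]
    ring
  · have hptwise : ∀ j ∈ Finset.range (n - i + 1),
        (if ((if v.1 0 = i then 0 else 1) + (if v.1 1 = j then 0 else 1)
            + (if v.1 0 + v.1 1 = i + j then 0 else 1) = 2) then (1:ℝ) else 0)
        = (if v.1 1 = j then (1:ℝ) else 0)
          + (if (i ≤ v.1 0 + v.1 1 ∧ v.1 0 + v.1 1 - i = j) then (1:ℝ) else 0) := by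
      intro j _
      split_ifs <;> first | (exfalso; omega) | norm_num
    rw [Finset.sum_congr rfl hptwise, Finset.sum_add_distrib, Finset.sum_ite_eq]
    simp only [Finset.mem_range, Nat.lt_succ_iff]
    have hsecond : ∑ j ∈ Finset.range (n - i + 1),
        (if (i ≤ v.1 0 + v.1 1 ∧ v.1 0 + v.1 1 - i = j) then (1:ℝ) else 0)
        = if v.1 2 ≤ n - i then 1 else 0 := by
      by_cases hle : i ≤ v.1 0 + v.1 1
      · have heq : ∀ j, (i ≤ v.1 0 + v.1 1 ∧ v.1 0 + v.1 1 - i = j) ↔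
            (v.1 0 + v.1 1 - i = j) := fun j => ⟨fun h => h.2, fun h => ⟨hle, h⟩⟩
        simp only [heq]
        rw [Finset.sum_ite_eq]
        simp only [Finset.mem_range, Nat.lt_succ_iff]
        rw [if_pos (by omega : v.1 0 + v.1 1 - i ≤ n - i), if_pos (by omega : v.1 2 ≤ n - i)]
      · have heq : ∀ j ∈ Finset.range (n - i + 1),
            (if (i ≤ v.1 0 + v.1 1 ∧ v.1 0 + v.1 1 - i = j) then (1:ℝ) else 0) = 0 := by
          intro j _; rw [if_neg]; exact fun h => hle h.1
        rw [Finset.sum_congr rfl heq, Finset.sum_const, smul_zero,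
          if_neg (by omega : ¬ v.1 2 ≤ n - i)]
    rw [hsecond, if_neg ha]
    ring
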